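/- Under the hypotheses of the quantitative Logan theorem (f̂ L^1-concentrated on S with norm ≤ ε, δ = |M||S|/N < 1/2, g agreeing with f off M and ||ĝ||_1 minimal), the average error on the missing set satisfies (1/|M|) Σ_{x ∈ M} |f(x) − g(x)| ≤ (2ε/(1−2δ))·(1/N) Σ_{x ∈ Z_N} |f(x)|. -/

import Mathlib

open Finset

/-- The discrete Fourier transform on `ZMod N`:
`f̂(ω) = N^{-1/2} ∑_x f(x) e^{-2πiωx/N}`. -/
noncomputable def dft {N : ℕ} [NeZero N] (f : ZMod N → ℂ) (ω : ZMod N) : ℂ :=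
  (Real.sqrt N : ℂ)⁻¹ *
    ∑ x : ZMod N, f x * Complex.exp (-(2 * Real.pi * Complex.I) * ((ω.val * x.val : ℕ) : ℂ) / (N : ℂ))

/-- `||u||_{L^1(A)} = ∑_{x ∈ A} |u(x)|`. -/
noncomputable def l1 {N : ℕ} [NeZero N] (A : Finset (ZMod N)) (u : ZMod N → ℂ) : ℝ :=
  ∑ x ∈ A, ‖u x‖

lemma dft_eq_mdft {N : ℕ} [NeZero N] (f : ZMod N → ℂ) (ω : ZMod N) :
    dft f ω = (Real.sqrt N : ℂ)⁻¹ * ZMod.dft f ω := by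
  rw [dft, ZMod.dft_apply]
  congr 1
  refine Finset.sum_congr rfl fun x _ => ?_
  rw [smul_eq_mul, mul_comm]
  congr 1
  have h1 : (-(x * ω) : ZMod N) = ((-(ω.val * x.val : ℤ) : ℤ) : ZMod N) := by
    push_cast [ZMod.natCast_val, ZMod.intCast_zmod_cast]
    simp [ZMod.natCast_val, ZMod.intCast_cast]
    ring
  rw [h1, ZMod.stdAddChar_coe]
  push_cast
  ring_nf

open ZMod in
lemma abs_le_inv_dft {N : ℕ} [NeZero N] (u : ZMod N → ℂ) (x : ZMod N) :
    ‖u x‖ ≤ (N : ℝ)⁻¹ * ∑ ω, ‖ZMod.dft u ω‖ := by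
  have hx : u x = (N:ℂ)⁻¹ • ∑ ω, ZMod.stdAddChar (ω * x) • ZMod.dft u ω := by
    conv_lhs => rw [← (ZMod.dft (E := ℂ)).symm_apply_apply u]
    exact ZMod.invDFT_apply _ _
  rw [hx, smul_eq_mul, norm_mul, norm_inv, Complex.norm_natCast]
  gcongr
  refine (norm_sum_le _ _).trans (le_of_eq ?_)
  refine Finset.sum_congr rfl fun ω _ => ?_
  rw [smul_eq_mul, norm_mul, ZMod.stdAddChar_apply, Circle.norm_coe, one_mul]

lemma abs_dft_le {N : ℕ} [NeZero N] (u : ZMod N → ℂ) (ω : ZMod N) :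
    ‖ZMod.dft u ω‖ ≤ ∑ x, ‖u x‖ := by
  rw [ZMod.dft_apply]
  refine (norm_sum_le _ _).trans (le_of_eq ?_)
  refine Finset.sum_congr rfl fun x _ => ?_
  rw [smul_eq_mul, norm_mul, ZMod.stdAddChar_apply, Circle.norm_coe, one_mul]

lemma l1_eq {N : ℕ} [NeZero N] (A : Finset (ZMod N)) (u : ZMod N → ℂ) :
    l1 A (dft u) = (Real.sqrt N)⁻¹ * ∑ x ∈ A, ‖ZMod.dft u x‖ := by
  simp only [l1, dft_eq_mdft, norm_mul, norm_inv, Complex.norm_real, Real.norm_eq_abs,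
    abs_of_nonneg (Real.sqrt_nonneg _), Finset.mul_sum]

theorem stmt5 {N : ℕ} [NeZero N] (f g : ZMod N → ℂ) (M S : Finset (ZMod N))
    (ε : ℝ) (hε : 0 ≤ ε)
    (hconc : l1 Sᶜ (dft f) ≤ ε / N * l1 univ (dft f))
    (hδ : (M.card : ℝ) * S.card / N < 1 / 2)
    (hagree : ∀ x ∉ M, g x = f x)
    (hmin : l1 univ (dft g) ≤ l1 univ (dft f)) :
    (1 / (M.card : ℝ)) * ∑ x ∈ M, ‖f x - g x‖ ≤
      2 * ε / (1 - 2 * ((M.card : ℝ) * S.card / N)) * (1 / N) *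
        ∑ x : ZMod N, ‖f x‖ := by
  have hN : (0:ℝ) < N := Nat.cast_pos.mpr (Nat.pos_of_ne_zero (NeZero.ne N))
  have hsq : (0:ℝ) < (Real.sqrt N)⁻¹ := inv_pos.mpr (Real.sqrt_pos.mpr hN)
  have hδ' : (0:ℝ) < 1 - 2 * ((M.card : ℝ) * S.card / N) := by linarith
  have hfsum : (0:ℝ) ≤ ∑ x : ZMod N, ‖f x‖ :=
    Finset.sum_nonneg fun x _ => norm_nonneg _
  set h : ZMod N → ℂ := f - g with hh
  set A : ℝ := ∑ x ∈ M, ‖f x - g x‖ with hA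
  have hA' : A = ∑ x ∈ M, ‖h x‖ := by
    refine Finset.sum_congr rfl fun x _ => rfl
  have hAnn : 0 ≤ A := Finset.sum_nonneg fun x _ => norm_nonneg _
  -- rewrite hypotheses in terms of ZMod.dft
  rw [l1_eq, l1_eq] at hconc hmin
  have hconc' : ∑ x ∈ Sᶜ, ‖ZMod.dft f x‖ ≤
      ε / N * ∑ x, ‖ZMod.dft f x‖ := by
    rw [show ε / N * ((Real.sqrt N)⁻¹ * ∑ x, ‖ZMod.dft f x‖) =
      (Real.sqrt N)⁻¹ * (ε / N * ∑ x, ‖ZMod.dft f x‖) by ring] at hconc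
    exact le_of_mul_le_mul_left hconc hsq
  have hmin' : ∑ x, ‖ZMod.dft g x‖ ≤ ∑ x, ‖ZMod.dft f x‖ :=
    le_of_mul_le_mul_left hmin hsq
  -- h vanishes off M
  have hsupp : ∀ x, x ∉ M → h x = 0 := by
    intro x hx; simp [hh, hagree x hx]
  have hsum_h : ∑ x, ‖h x‖ = A := by
    rw [hA', ← Finset.sum_subset (Finset.subset_univ M)]
    intro x _ hx; rw [hsupp x hx, norm_zero]
  -- dft of h
  have hdfth : ZMod.dft h = ZMod.dft f - ZMod.dft g := map_sub _ _ _
  -- forward bound on S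
  have hTS : ∑ ω ∈ S, ‖ZMod.dft h ω‖ ≤ (S.card : ℝ) * A := by
    calc ∑ ω ∈ S, ‖ZMod.dft h ω‖ ≤ ∑ _ω ∈ S, A := by
          refine Finset.sum_le_sum fun ω _ => ?_
          rw [← hsum_h]; exact abs_dft_le h ω
      _ = (S.card : ℝ) * A := by rw [Finset.sum_const, nsmul_eq_mul]
  -- the minimality bound: T_Sc ≤ T_S + 2 * Ff_Sc
  have htri1 : ∀ (T : Finset (ZMod N)), ∑ ω ∈ T, ‖ZMod.dft h ω‖ ≤
      ∑ ω ∈ T, ‖ZMod.dft f ω‖ + ∑ ω ∈ T, ‖ZMod.dft g ω‖ := by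
    intro T
    rw [← Finset.sum_add_distrib]
    refine Finset.sum_le_sum fun ω _ => ?_
    rw [hdfth, Pi.sub_apply, sub_eq_add_neg]
    simpa using norm_add_le (ZMod.dft f ω) (-(ZMod.dft g ω))
  have htri2 : ∑ ω ∈ S, ‖ZMod.dft f ω‖ - ∑ ω ∈ S, ‖ZMod.dft h ω‖ ≤
      ∑ ω ∈ S, ‖ZMod.dft g ω‖ := by
    rw [sub_le_iff_le_add, ← Finset.sum_add_distrib]
    refine Finset.sum_le_sum fun ω _ => ?_
    have : ZMod.dft f ω = ZMod.dft h ω + ZMod.dft g ω := by rw [hdfth]; simp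
    rw [this]
    exact (norm_add_le _ _).trans (le_of_eq (add_comm _ _))
  have hsplit : ∀ u : ZMod N → ℂ, ∑ ω ∈ S, ‖ZMod.dft u ω‖
      + ∑ ω ∈ Sᶜ, ‖ZMod.dft u ω‖ = ∑ ω, ‖ZMod.dft u ω‖ := fun u =>
    Finset.sum_add_sum_compl S _
  have hTSc : ∑ ω ∈ Sᶜ, ‖ZMod.dft h ω‖ ≤
      ∑ ω ∈ S, ‖ZMod.dft h ω‖ + 2 * ∑ ω ∈ Sᶜ, ‖ZMod.dft f ω‖ := by
    have h1 := htri1 Sᶜ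
    have h2 := htri2
    have h3 := hsplit f
    have h4 := hsplit g
    linarith [hmin']
  -- inverse bound
  have hAle : A ≤ (M.card : ℝ) * ((N:ℝ)⁻¹ * ∑ ω, ‖ZMod.dft h ω‖) := by
    rw [hA']
    calc ∑ x ∈ M, ‖h x‖
        ≤ ∑ _x ∈ M, (N:ℝ)⁻¹ * ∑ ω, ‖ZMod.dft h ω‖ :=
          Finset.sum_le_sum fun x _ => abs_le_inv_dft h x
      _ = (M.card : ℝ) * ((N:ℝ)⁻¹ * ∑ ω, ‖ZMod.dft h ω‖) := by
          rw [Finset.sum_const, nsmul_eq_mul]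
  -- bound Ff total
  have hFf : ∑ ω, ‖ZMod.dft f ω‖ ≤ (N:ℝ) * ∑ x, ‖f x‖ := by
    calc ∑ ω, ‖ZMod.dft f ω‖ ≤ ∑ _ω : ZMod N, ∑ x, ‖f x‖ :=
          Finset.sum_le_sum fun ω _ => abs_dft_le f ω
      _ = (N:ℝ) * ∑ x, ‖f x‖ := by
          rw [Finset.sum_const, nsmul_eq_mul, Finset.card_univ, ZMod.card]
  -- combine
  have hTh : ∑ ω, ‖ZMod.dft h ω‖ ≤
      2 * (S.card : ℝ) * A + 2 * (ε / N) * ((N:ℝ) * ∑ x, ‖f x‖) := by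
    have h3 := hsplit h
    have hconc2 : 2 * ∑ ω ∈ Sᶜ, ‖ZMod.dft f ω‖ ≤
        2 * (ε / N) * ∑ ω, ‖ZMod.dft f ω‖ := by linarith
    have hFf2 : 2 * (ε / N) * ∑ ω, ‖ZMod.dft f ω‖ ≤
        2 * (ε / N) * ((N:ℝ) * ∑ x, ‖f x‖) := by
      have : (0:ℝ) ≤ 2 * (ε / N) := by positivity
      exact mul_le_mul_of_nonneg_left hFf this
    linarith [hTS, hTSc]
  have key : (1 - 2 * ((M.card : ℝ) * S.card / N)) * A ≤
      2 * ε * (M.card : ℝ) / N * ∑ x, ‖f x‖ := by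
    have hMnn : (0:ℝ) ≤ (M.card : ℝ) := Nat.cast_nonneg _
    have := mul_le_mul_of_nonneg_left hTh (mul_nonneg hMnn (le_of_lt (inv_pos.mpr hN)))
    have hexp : (M.card : ℝ) * (N:ℝ)⁻¹ *
        (2 * (S.card : ℝ) * A + 2 * (ε / N) * ((N:ℝ) * ∑ x, ‖f x‖))
        = 2 * ((M.card : ℝ) * S.card / N) * A + 2 * ε * (M.card : ℝ) / N * ∑ x, ‖f x‖ := by
      field_simp
    nlinarith [hAle]
  -- finish
  rcases Nat.eq_zero_or_pos M.card with hM | hM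
  · have : A = 0 := by
      rw [hA, Finset.card_eq_zero.mp hM]; simp
    rw [this, mul_zero]
    positivity
  · have hMpos : (0:ℝ) < (M.card : ℝ) := Nat.cast_pos.mpr hM
    rw [one_div, inv_mul_le_iff₀ hMpos]
    have h2 : A ≤ 2 * ε * (M.card : ℝ) / N * (∑ x, ‖f x‖) /
        (1 - 2 * ((M.card : ℝ) * S.card / N)) := by
      rw [le_div_iff₀ hδ']
      linarith [key]
    refine h2.trans (le_of_eq ?_)
    have hid : (N:ℝ) * (1 - 2 * ((M.card : ℝ) * S.card / N)) =
        N - 2 * ((M.card : ℝ) * S.card) := by field_simp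
    have hd : (0:ℝ) < N - 2 * ((M.card : ℝ) * S.card) := by
      rw [← hid]; exact mul_pos hN hδ'
    field_simp [hδ'.ne', hd.ne']
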